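/- Let G be a diagonal real 3×3 matrix whose diagonal entries are positive and pairwise distinct, and let U ∈ O(3). Then a matrix Q ∈ SO(3) satisfies: for every η ∈ ℝ³ the derivative at t = 0 of t ↦ tr(G (I₃ − Uᵀ Q exp(t η^) U)) equals 0, if and only if Q ∈ {I₃, U D₁ Uᵀ, U D₂ Uᵀ, U D₃ Uᵀ}, where D_i = 2 e_i e_iᵀ − I₃ and e_i is the i-th standard basis vector of ℝ³. -/

import Mathlib

open Matrix

/-- The hat map sending `v ∈ ℝ³` to the skew-symmetric matrix `v^` with `v^ w = v × w`. -/
def hat (v : Fin 3 → ℝ) : Matrix (Fin 3) (Fin 3) ℝ :=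
  !![0, -v 2, v 1; v 2, 0, -v 0; -v 1, v 0, 0]

/-- The matrix `D i = 2 eᵢ eᵢᵀ − I₃`. -/
def Dmat (i : Fin 3) : Matrix (Fin 3) (Fin 3) ℝ :=
  (2 : ℝ) • vecMulVec (Pi.single i 1) (Pi.single i 1) - 1

section Aux
open NormedSpace
attribute [local instance] Matrix.linftyOpNormedRing Matrix.linftyOpNormedAlgebra

lemma deriv_aux (M A : Matrix (Fin 3) (Fin 3) ℝ) :
    HasDerivAt (fun t : ℝ => (M * exp (t • A)).trace) (M * A).trace 0 := by
  have h1 : HasDerivAt (fun t : ℝ => exp (t • A)) A 0 := by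
    have := hasDerivAt_exp_smul_const A (0 : ℝ); simp at this; exact this
  have h2 := h1.const_mul M
  have := ((Matrix.traceLinearMap (Fin 3) ℝ ℝ).toContinuousLinearMap).hasFDerivAt.comp_hasDerivAt 0 h2
  simp [Function.comp] at this; exact this

lemma deriv_full (G U Q : Matrix (Fin 3) (Fin 3) ℝ) (η : Fin 3 → ℝ) :
    HasDerivAt (fun t : ℝ => (G * (1 - Uᵀ * Q * exp (t • hat η) * U)).trace)
      (-((U * G * Uᵀ * Q) * hat η).trace) 0 := by
  have key : ∀ X : Matrix (Fin 3) (Fin 3) ℝ,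
      (G * (1 - Uᵀ * Q * X * U)).trace = G.trace - ((U * G * Uᵀ * Q) * X).trace := by
    intro X
    rw [mul_sub, mul_one, trace_sub]
    congr 1
    have h1 : G * (Uᵀ * Q * X * U) = (G * Uᵀ * Q * X) * U := by
      simp only [Matrix.mul_assoc]
    rw [h1, trace_mul_comm]
    congr 1
    simp only [Matrix.mul_assoc]
  have h := (hasDerivAt_const (0:ℝ) G.trace).sub (deriv_aux (U * G * Uᵀ * Q) (hat η))
  simp only [zero_sub] at h
  exact h.congr_of_eventuallyEq (by filter_upwards with t; rw [key]; rfl)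

end Aux

lemma trace_mul_hat (M : Matrix (Fin 3) (Fin 3) ℝ) (η : Fin 3 → ℝ) :
    (M * hat η).trace =
      η 0 * (M 1 2 - M 2 1) + η 1 * (M 2 0 - M 0 2) + η 2 * (M 0 1 - M 1 0) := by
  simp [hat, Matrix.trace_fin_three, Matrix.mul_apply, Fin.sum_univ_three]
  ring

lemma trace_hat_zero (M : Matrix (Fin 3) (Fin 3) ℝ) (hM : Mᵀ = M) (η : Fin 3 → ℝ) :
    (M * hat η).trace = 0 := by
  rw [trace_mul_hat]
  have h1 := congrFun (congrFun hM 1) 2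
  have h2 := congrFun (congrFun hM 2) 0
  have h3 := congrFun (congrFun hM 0) 1
  simp only [transpose_apply] at h1 h2 h3
  rw [h1, h2, h3]; ring

lemma Dmat_eq (i : Fin 3) :
    Dmat i = diagonal (fun j => if j = i then (1:ℝ) else -1) := by
  ext j k
  fin_cases i <;> fin_cases j <;> fin_cases k <;>
    simp [Dmat, vecMulVec_apply, Matrix.one_apply, diagonal, Pi.single_apply] <;> norm_num


/-- For diagonal `G` with positive pairwise-distinct diagonal entries and
`U ∈ O(3)`, a rotation `Q ∈ SO(3)` is a critical point of
`Q ↦ tr(G(I₃ − UᵀQU))` (i.e. the derivative at `t = 0` along every curve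
`t ↦ Q exp(t η^)` vanishes) iff `Q ∈ {I₃, U D₁ Uᵀ, U D₂ Uᵀ, U D₃ Uᵀ}`. -/
theorem critical_points_error_function
    (G U Q : Matrix (Fin 3) (Fin 3) ℝ) (hG : G.IsDiag)
    (hGpos : ∀ i, 0 < G i i) (hGdist : ∀ i j, i ≠ j → G i i ≠ G j j)
    (hU : Uᵀ * U = 1) (hQ : Qᵀ * Q = 1) (hQdet : Q.det = 1) :
    (∀ η : Fin 3 → ℝ,
        HasDerivAt
          (fun t : ℝ => (G * (1 - Uᵀ * Q * NormedSpace.exp (t • hat η) * U)).trace)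
          0 0)
      ↔ Q ∈ ({1, U * Dmat 0 * Uᵀ, U * Dmat 1 * Uᵀ, U * Dmat 2 * Uᵀ} :
          Set (Matrix (Fin 3) (Fin 3) ℝ)) := by
  have tri : ∀ j : Fin 3, j = 0 ∨ j = 1 ∨ j = 2 := by decide
  have hU' : U * Uᵀ = 1 := mul_eq_one_comm.mp hU
  have hQ' : Q * Qᵀ = 1 := mul_eq_one_comm.mp hQ
  have cUl : ∀ X : Matrix (Fin 3) (Fin 3) ℝ, Uᵀ * (U * X) = X := fun X => by
    rw [← Matrix.mul_assoc, hU, one_mul]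
  have cUr : ∀ X : Matrix (Fin 3) (Fin 3) ℝ, U * (Uᵀ * X) = X := fun X => by
    rw [← Matrix.mul_assoc, hU', one_mul]
  have cQl : ∀ X : Matrix (Fin 3) (Fin 3) ℝ, Qᵀ * (Q * X) = X := fun X => by
    rw [← Matrix.mul_assoc, hQ, one_mul]
  have hGsym : Gᵀ = G := by
    ext i j
    by_cases h : i = j
    · subst h; simp
    · rw [transpose_apply, hG h, hG (Ne.symm h)]
  set d : Fin 3 → ℝ := fun i => G i i with hd
  have hGdiag : G = diagonal d := by
    ext i j
    by_cases h : i = j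
    · subst h; simp [diagonal, hd]
    · simp [diagonal, h, hG h]
  simp only [Set.mem_insert_iff, Set.mem_singleton_iff]
  constructor
  · intro h
    have hzero : ∀ η, ((U * G * Uᵀ * Q) * hat η).trace = 0 := fun η => by
      have := (deriv_full G U Q η).unique (h η)
      linarith
    set M := U * G * Uᵀ * Q with hM
    have hs1 : M 1 2 = M 2 1 := by
      have e := hzero ![1, 0, 0]; rw [trace_mul_hat] at e
      simp at e; linarith
    have hs2 : M 2 0 = M 0 2 := by
      have e := hzero ![0, 1, 0]; rw [trace_mul_hat] at e
      simp at e; linarith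
    have hs3 : M 0 1 = M 1 0 := by
      have e := hzero ![0, 0, 1]; rw [trace_mul_hat] at e
      simp at e; linarith
    have hMsym : Mᵀ = M := by
      ext i j
      rw [transpose_apply]
      rcases tri i with hi | hi | hi <;> rcases tri j with hj | hj | hj <;>
        subst hi <;> subst hj <;>
        first
          | rfl
          | exact hs1
          | exact hs1.symm
          | exact hs2
          | exact hs2.symm
          | exact hs3
          | exact hs3.symm
    set B := Uᵀ * Q * U with hB
    have hBt : Bᵀ = Uᵀ * Qᵀ * U := by
      rw [hB]; simp [Matrix.transpose_mul, Matrix.mul_assoc]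
    have hGB : G * B = Bᵀ * G := by
      have h1 : Uᵀ * M * U = G * B := by
        rw [hM, hB]; simp only [Matrix.mul_assoc, cUl]
      have h2 : Uᵀ * Mᵀ * U = Bᵀ * G := by
        rw [hM, hBt]
        simp only [Matrix.transpose_mul, Matrix.transpose_transpose, hGsym]
        simp only [Matrix.mul_assoc, cUl, hU, Matrix.mul_one]
      rw [← h1, ← h2, hMsym]
    have hBo : Bᵀ * B = 1 := by
      rw [hBt, hB]; simp only [Matrix.mul_assoc, cUl, cUr, cQl]; exact hU
    have hBo' : B * Bᵀ = 1 := mul_eq_one_comm.mp hBo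
    have cBr : ∀ X : Matrix (Fin 3) (Fin 3) ℝ, B * (Bᵀ * X) = X := fun X => by
      rw [← Matrix.mul_assoc, hBo', one_mul]
    have e1 : Bᵀ * (G * (G * B)) = G * G := by
      calc Bᵀ * (G * (G * B)) = Bᵀ * (G * (Bᵀ * G)) := by rw [hGB]
        _ = (Bᵀ * G) * (Bᵀ * G) := by simp only [Matrix.mul_assoc]
        _ = (G * B) * (Bᵀ * G) := by rw [hGB]
        _ = G * (B * (Bᵀ * G)) := by simp only [Matrix.mul_assoc]
        _ = G * G := by rw [cBr]
    have hcomm : G * (G * B) = B * (G * G) := by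
      calc G * (G * B) = B * (Bᵀ * (G * (G * B))) := (cBr _).symm
        _ = B * (G * G) := by rw [e1]
    have hoff : ∀ i j, i ≠ j → B i j = 0 := by
      intro i j hij
      have e : ((diagonal d * diagonal d) * B) i j = (B * (diagonal d * diagonal d)) i j := by
        rw [Matrix.mul_assoc, ← hGdiag, hcomm]
      rw [diagonal_mul_diagonal] at e
      rw [diagonal_mul, mul_diagonal] at e
      have h2 : B i j * (d i * d i - d j * d j) = 0 := by linear_combination e
      rcases mul_eq_zero.mp h2 with h3 | h3
      · exact h3
      · exfalso
        have h4 : (d i - d j) * (d i + d j) = 0 := by linear_combination h3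
        rcases mul_eq_zero.mp h4 with h5 | h5
        · exact hGdist i j hij (show d i = d j by linarith)
        · have hgi := hGpos i; have hgj := hGpos j
          have egi : d i = G i i := rfl
          have egj : d j = G j j := rfl
          linarith
    have hBdiag : B = diagonal (fun i => B i i) := by
      ext i j
      by_cases hij : i = j
      · subst hij; simp [diagonal]
      · simp [diagonal, hij, hoff i j hij]
    have hsq : ∀ i, B i i * B i i = 1 := by
      intro i
      have e : Bᵀ * B = diagonal (fun i => B i i * B i i) := by
        calc Bᵀ * B = (diagonal (fun i => B i i))ᵀ * diagonal (fun i => B i i) := by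
              rw [← hBdiag]
          _ = diagonal (fun i => B i i * B i i) := by
              rw [diagonal_transpose, diagonal_mul_diagonal]
      have e2 := e.symm.trans hBo
      have := congrFun (congrFun e2 i) i
      simpa [diagonal, Matrix.one_apply] using this
    have hUdet : U.det * U.det = 1 := by
      have := congrArg Matrix.det hU
      simpa [det_mul, det_transpose] using this
    have hdetB : B.det = 1 := by
      rw [hB]
      simp only [det_mul, det_transpose, hQdet]
      linear_combination hUdet
    have hprod : B 0 0 * B 1 1 * B 2 2 = 1 := by
      rw [hBdiag, det_diagonal] at hdetB
      simpa [Fin.prod_univ_three] using hdetB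
    have hQB : U * B * Uᵀ = Q := by
      rw [hB]
      simp only [Matrix.mul_assoc, cUr, hU', Matrix.mul_one]
    rcases mul_self_eq_one_iff.mp (hsq 0) with h0 | h0 <;>
      rcases mul_self_eq_one_iff.mp (hsq 1) with h1 | h1 <;>
        rcases mul_self_eq_one_iff.mp (hsq 2) with h2 | h2
    · left
      have hBe : B = 1 := by
        rw [hBdiag]
        ext i j
        rcases tri i with hi | hi | hi <;> rcases tri j with hj | hj | hj <;>
          subst hi <;> subst hj <;> simp [diagonal, Matrix.one_apply, h0, h1, h2]
      rw [← hQB, hBe, Matrix.mul_one, hU']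
    · rw [h0, h1, h2] at hprod; norm_num at hprod
    · rw [h0, h1, h2] at hprod; norm_num at hprod
    · right; left
      have hBe : B = Dmat 0 := by
        rw [hBdiag, Dmat_eq]
        ext i j
        rcases tri i with hi | hi | hi <;> rcases tri j with hj | hj | hj <;>
          subst hi <;> subst hj <;> simp [diagonal, h0, h1, h2]
      rw [← hQB, hBe]
    · rw [h0, h1, h2] at hprod; norm_num at hprod
    · right; right; left
      have hBe : B = Dmat 1 := by
        rw [hBdiag, Dmat_eq]
        ext i j
        rcases tri i with hi | hi | hi <;> rcases tri j with hj | hj | hj <;>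
          subst hi <;> subst hj <;> simp [diagonal, h0, h1, h2]
      rw [← hQB, hBe]
    · right; right; right
      have hBe : B = Dmat 2 := by
        rw [hBdiag, Dmat_eq]
        ext i j
        rcases tri i with hi | hi | hi <;> rcases tri j with hj | hj | hj <;>
          subst hi <;> subst hj <;> simp [diagonal, h0, h1, h2]
      rw [← hQB, hBe]
    · rw [h0, h1, h2] at hprod; norm_num at hprod
  · intro hmem η
    have key : ∀ S : Matrix (Fin 3) (Fin 3) ℝ, (G * S)ᵀ = G * S → Q = U * S * Uᵀ →
        (U * G * Uᵀ * Q)ᵀ = U * G * Uᵀ * Q := by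
      intro S hS hQe
      have col : U * G * Uᵀ * (U * S * Uᵀ) = U * (G * S * Uᵀ) := by
        simp only [Matrix.mul_assoc, cUl]
      rw [hQe, col]
      calc (U * (G * S * Uᵀ))ᵀ = U * ((G * S)ᵀ * Uᵀ) := by
            simp only [Matrix.transpose_mul, Matrix.transpose_transpose, Matrix.mul_assoc]
        _ = U * (G * S * Uᵀ) := by rw [hS]
    have keyD : ∀ k : Fin 3, Q = U * Dmat k * Uᵀ → (U * G * Uᵀ * Q)ᵀ = U * G * Uᵀ * Q := by
      intro k hk
      refine key (Dmat k) ?_ hk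
      rw [hGdiag, Dmat_eq, diagonal_mul_diagonal, diagonal_transpose]
    have hsymM : (U * G * Uᵀ * Q)ᵀ = U * G * Uᵀ * Q := by
      rcases hmem with hh | hh | hh | hh
      · refine key 1 (by rw [Matrix.mul_one, hGsym]) ?_
        rw [hh, Matrix.mul_one, hU']
      · exact keyD 0 hh
      · exact keyD 1 hh
      · exact keyD 2 hh
    have h0 : ((U * G * Uᵀ * Q) * hat η).trace = 0 := trace_hat_zero _ hsymM η
    have hD := deriv_full G U Q η
    rw [h0, neg_zero] at hD
    exact hD
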